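/- Let R be a zero-sum-free semiring with only trivial idempotent pairs, and let M be a free R-module with basis S. Suppose M = P ⊕ Q as R-modules. Then there exists a subset S' ⊆ S such that P is free with basis S' and Q is free with basis S \ S'. -/

import Mathlib

/-- Auxiliary: if every basis vector indexed by `s` lies in `P` and every element of `P`
has coordinates supported on `s`, then `P` is free with basis `{b i : i ∈ s}`. -/
theorem exists_basis_of_supported {R M ι : Type*} [CommSemiring R]
    [AddCommMonoid M] [Module R M] (b : Module.Basis ι R M) (P : Submodule R M) (s : Set ι)
    (hmem : ∀ i : s, b i ∈ P)
    (hsupp : ∀ p ∈ P, ∀ j ∉ s, b.repr p j = 0) :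
    ∃ bP : Module.Basis s R P, ∀ i : s, (bP i : M) = b i := by
  classical
  set f : P →ₗ[R] (s →₀ R) :=
    (Finsupp.lsubtypeDomain (M := R) (R := R) s).comp (b.repr.toLinearMap.comp P.subtype)
      with hfdef
  set g : (s →₀ R) →ₗ[R] P :=
    Finsupp.linearCombination R (fun i : s => (⟨b i, hmem i⟩ : P)) with hgdef
  have hcoe : ∀ x : s →₀ R, ((g x : P) : M) = Finsupp.linearCombination R (fun i : s => b i) x := by
    intro x
    have := Finsupp.apply_linearCombination R P.subtype (fun i : s => (⟨b i, hmem i⟩ : P)) x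
    simpa [hgdef, Function.comp_def] using this
  have hfg : f.comp g = LinearMap.id := by
    apply Finsupp.lhom_ext
    intro i a
    have h1 : ((g (Finsupp.single i a) : P) : M) = a • b ↑i := by
      rw [hcoe, Finsupp.linearCombination_single]
    ext j
    simp only [LinearMap.comp_apply, LinearMap.id_apply, hfdef,
      Finsupp.lsubtypeDomain_apply, LinearEquiv.coe_coe, Submodule.coe_subtype,
      Finsupp.subtypeDomain_apply, h1, map_smul, Module.Basis.repr_self,
      Finsupp.smul_single, smul_eq_mul, mul_one, Finsupp.single_apply]
    by_cases h : i = j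
    · simp [h]
    · rw [if_neg h, if_neg (fun hc => h (Subtype.ext hc))]
  have hgf : g.comp f = LinearMap.id := by
    ext p
    simp only [LinearMap.comp_apply, LinearMap.id_apply]
    rw [hcoe, Finsupp.linearCombination_apply]
    have hfp : f p = (b.repr ↑p).subtypeDomain (· ∈ s) := rfl
    have hsub : ∀ x ∈ (b.repr ↑p).support, x ∈ s := by
      intro x hx
      by_contra hxs
      exact (Finsupp.mem_support_iff.mp hx) (hsupp ↑p p.2 x hxs)
    rw [hfp]
    refine (Finsupp.sum_subtypeDomain_index (h := fun i a => a • b i) hsub).trans ?_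
    rw [← Finsupp.linearCombination_apply, ← Module.Basis.repr_symm_apply,
      LinearEquiv.symm_apply_apply]
  refine ⟨Module.Basis.ofRepr (LinearEquiv.ofLinear f g hfg hgf), fun i => ?_⟩
  have h1 : (Module.Basis.ofRepr (LinearEquiv.ofLinear f g hfg hgf)) i = g (Finsupp.single i 1) := by
    rw [← Module.Basis.repr_symm_single_one]
    rfl
  rw [h1, hcoe, Finsupp.linearCombination_single, one_smul]

/-- Auxiliary: coordinates of elements of `P` vanish outside `s`. -/
theorem supp_aux {R M ι : Type*} [CommSemiring R] [AddCommMonoid M] [Module R M]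
    (b : Module.Basis ι R M) (P Q : Submodule R M)
    (huniq : ∀ (p p' : P) (q q' : Q), (p : M) + q = (p' : M) + q' → p = p' ∧ q = q')
    (s : Set ι) (hs : ∀ i ∈ s, b i ∈ P) (hsc : ∀ i ∉ s, b i ∈ Q)
    (p : M) (hp : p ∈ P) : ∀ j ∉ s, b.repr p j = 0 := by
  classical
  set c := b.repr p with hc
  set c1 := c.filter (· ∈ s) with hc1
  set c2 := c.filter (fun j => j ∉ s) with hc2
  have hadd : c1 + c2 = c := Finsupp.filter_pos_add_filter_neg c _
  have h1 : b.repr.symm c1 ∈ P := by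
    rw [Module.Basis.repr_symm_apply, Finsupp.linearCombination_apply, Finsupp.sum]
    apply Submodule.sum_mem
    intro j hj
    refine Submodule.smul_mem _ _ (hs j ?_)
    by_contra hjs
    exact (Finsupp.mem_support_iff.mp hj) (by rw [hc1, Finsupp.filter_apply_neg _ _ hjs])
  have h2 : b.repr.symm c2 ∈ Q := by
    rw [Module.Basis.repr_symm_apply, Finsupp.linearCombination_apply, Finsupp.sum]
    apply Submodule.sum_mem
    intro j hj
    refine Submodule.smul_mem _ _ (hsc j ?_)
    intro hjs
    exact (Finsupp.mem_support_iff.mp hj) (by rw [hc2, Finsupp.filter_apply_neg]; exact fun h => h hjs)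
  have hsum : ((⟨b.repr.symm c1, h1⟩ : P) : M) + ((⟨b.repr.symm c2, h2⟩ : Q) : M)
      = ((⟨p, hp⟩ : P) : M) + ((0 : Q) : M) := by
    simp only [Submodule.coe_zero, add_zero]
    rw [← map_add, hadd, hc, LinearEquiv.symm_apply_apply]
  obtain ⟨-, h0⟩ := huniq _ _ _ _ hsum
  have hc2zero : c2 = 0 := by
    have : b.repr.symm c2 = 0 := congrArg Subtype.val h0
    have := congrArg b.repr this
    simpa using this
  intro j hj
  have : c2 j = c j := by rw [hc2, Finsupp.filter_apply_pos]; exact hj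
  rw [← this, hc2zero]
  rfl

/-- Let `R` be a zero-sum-free commutative semiring with only trivial
idempotent pairs, and let `M` be a free `R`-module with basis `b : ι → M`.  Suppose
`M = P ⊕ Q`, i.e. every element of `M` is uniquely the sum of an element of `P` and an
element of `Q`.  Then there is a subset `s ⊆ ι` such that `P` is free with basis
`{b i : i ∈ s}` and `Q` is free with basis `{b i : i ∉ s}`. -/
theorem direct_summand_of_free {R M ι : Type*} [CommSemiring R]
    [AddCommMonoid M] [Module R M]
    (hzsf : ∀ a b : R, a + b = 0 → a = 0 ∧ b = 0)
    (htriv : ∀ e f : R, e + f = 1 → e * f = 0 → (e = 0 ∧ f = 1) ∨ (e = 1 ∧ f = 0))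
    (b : Module.Basis ι R M) (P Q : Submodule R M)
    (hdec : ∀ m : M, ∃! pq : P × Q, ((pq.1 : M) + (pq.2 : M) = m)) :
    ∃ s : Set ι, ∃ bP : Module.Basis s R P, ∃ bQ : Module.Basis ↥(sᶜ) R Q,
      (∀ i : s, (bP i : M) = b i) ∧ (∀ i : ↥(sᶜ), (bQ i : M) = b i) := by
  classical
  have huniq : ∀ (p p' : P) (q q' : Q), (p : M) + q = (p' : M) + q' → p = p' ∧ q = q' := by
    intro p p' q q' h
    obtain ⟨pq, -, h2⟩ := hdec ((p' : M) + q')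
    have e1 : ((p, q) : P × Q) = pq := h2 (p, q) h
    have e2 : ((p', q') : P × Q) = pq := h2 (p', q') rfl
    have : ((p, q) : P × Q) = (p', q') := e1.trans e2.symm
    exact ⟨congrArg Prod.fst this, congrArg Prod.snd this⟩
  have huniq' : ∀ (q q' : Q) (p p' : P), (q : M) + p = (q' : M) + p' → q = q' ∧ p = p' := by
    intro q q' p p' h
    have := huniq p p' q q' (by rw [add_comm (p : M), add_comm (p' : M)]; exact h)
    exact ⟨this.2, this.1⟩
  -- every basis vector lies in P or Q
  have hPQ : ∀ i, b i ∈ P ∨ b i ∈ Q := by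
    intro i
    obtain ⟨⟨p, q⟩, hpq, -⟩ := hdec (b i)
    simp only at hpq
    set e := b.repr (p : M) i with he
    set f := b.repr (q : M) i with hf
    have hsum : b.repr (p : M) + b.repr (q : M) = Finsupp.single i 1 := by
      rw [← map_add, hpq, Module.Basis.repr_self]
    have hef : e + f = 1 := by
      have := DFunLike.congr_fun hsum i
      simpa using this
    have hzero : ∀ j, j ≠ i → b.repr (p : M) j = 0 ∧ b.repr (q : M) j = 0 := by
      intro j hj
      have := DFunLike.congr_fun hsum j
      have hij : ¬ i = j := fun h => hj h.symm
      simp only [Finsupp.add_apply, Finsupp.single_apply, if_neg hij] at this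
      exact hzsf _ _ this
    have hp' : (p : M) = e • b i := by
      apply b.repr.injective
      rw [map_smul, Module.Basis.repr_self]
      ext j
      by_cases hj : j = i
      · subst hj; simp [he]
      · have hij : ¬ i = j := fun h => hj h.symm
        simp [(hzero j hj).1, Finsupp.single_apply, hij]
    have hq' : (q : M) = f • b i := by
      apply b.repr.injective
      rw [map_smul, Module.Basis.repr_self]
      ext j
      by_cases hj : j = i
      · subst hj; simp [hf]
      · have hij : ¬ i = j := fun h => hj h.symm
        simp [(hzero j hj).2, Finsupp.single_apply, hij]
    have hdecomp : ((e • p : P) : M) + ((e • q : Q) : M) = ((p : P) : M) + ((0 : Q) : M) := by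
      simp only [Submodule.coe_smul, Submodule.coe_zero, add_zero]
      rw [← smul_add, hpq, ← hp']
    obtain ⟨-, h0⟩ := huniq (e • p) p (e • q) 0 hdecomp
    have hmul : e * f = 0 := by
      have h1 : e • (q : M) = 0 := by
        have := congrArg Subtype.val h0
        simpa using this
      have h2 : (e * f) • b i = 0 := by
        rw [mul_smul, ← hq']; exact h1
      have := congrArg b.repr h2
      rw [map_smul, Module.Basis.repr_self, map_zero] at this
      have := DFunLike.congr_fun this i
      simpa using this
    rcases htriv e f hef hmul with ⟨-, hf1⟩ | ⟨he1, -⟩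
    · right
      have : b i = (q : M) := by rw [hq', hf1, one_smul]
      rw [this]; exact q.2
    · left
      have : b i = (p : M) := by rw [hp', he1, one_smul]
      rw [this]; exact p.2
  set s : Set ι := {i | b i ∈ P} with hs
  have hsP : ∀ i ∈ s, b i ∈ P := fun i hi => hi
  have hsc : ∀ i ∉ s, b i ∈ Q := fun i hi => (hPQ i).resolve_left hi
  have hsuppP : ∀ p ∈ P, ∀ j ∉ s, b.repr p j = 0 :=
    supp_aux b P Q huniq s hsP hsc
  have hsuppQ : ∀ q ∈ Q, ∀ j ∉ sᶜ, b.repr q j = 0 :=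
    supp_aux b Q P huniq' sᶜ (fun i hi => hsc i hi) (fun i hi => hsP i (not_not.mp hi))
  obtain ⟨bP, hbP⟩ := exists_basis_of_supported b P s (fun i => hsP i i.2) hsuppP
  obtain ⟨bQ, hbQ⟩ := exists_basis_of_supported b Q sᶜ (fun i => hsc i i.2) hsuppQ
  exact ⟨s, bP, bQ, hbP, hbQ⟩
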